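/- Let $n,m\ge 1$, let $H$ be an $n\times m$ complex matrix, let $P>0$, and let $Q$ be an $m\times m$ Hermitian positive semidefinite matrix with $\mathrm{Tr}(Q)\le P$. Then $\det(I_n+HQH^*)\le\det(I_n+P\,HH^*)$. -/

import Mathlib

open Matrix
open scoped ComplexOrder

lemma my_trace_eq_sum_eig {k : ℕ} {A : Matrix (Fin k) (Fin k) ℂ} (hA : A.IsHermitian) :
    A.trace = ∑ i, (hA.eigenvalues i : ℂ) := by
  nth_rw 1 [hA.spectral_theorem]
  rw [Unitary.conjStarAlgAut_apply, Matrix.trace_mul_cycle,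
    (Matrix.mem_unitaryGroup_iff').mp (Matrix.IsHermitian.eigenvectorUnitary hA).2, one_mul,
    Matrix.trace_diagonal]
  norm_num

lemma my_one_le_det_one_add {k : ℕ} {C : Matrix (Fin k) (Fin k) ℂ} (hC : C.PosSemidef) :
    1 ≤ (1 + C).det := by
  have hU := (Matrix.mem_unitaryGroup_iff).mp (Matrix.IsHermitian.eigenvectorUnitary hC.1).2
  set U : Matrix (Fin k) (Fin k) ℂ := (Matrix.IsHermitian.eigenvectorUnitary hC.1 : Matrix (Fin k) (Fin k) ℂ) with hUdef
  set D : Matrix (Fin k) (Fin k) ℂ := diagonal (RCLike.ofReal ∘ hC.1.eigenvalues) with hD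
  have h1 : (1 + C) = U * (1 + D) * star U := by
    have : U * (1 + D) * star U = U * star U + U * D * star U := by noncomm_ring
    rw [this, hU]
    conv_lhs => rw [hC.1.spectral_theorem]
    rw [Unitary.conjStarAlgAut_apply]
  rw [h1, Matrix.det_mul_right_comm, hU, one_mul]
  have h2 : (1 + D) = diagonal (fun i => 1 + (hC.1.eigenvalues i : ℂ)) := by
    rw [hD, ← Matrix.diagonal_one, Matrix.diagonal_add]
    rfl
  rw [h2, Matrix.det_diagonal]
  have h3 : ∏ i, ((1 : ℂ) + (hC.1.eigenvalues i : ℂ))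
      = ((∏ i, (1 + hC.1.eigenvalues i) : ℝ) : ℂ) := by
    push_cast
    rfl
  rw [h3]
  have h4 : (1 : ℝ) ≤ ∏ i, (1 + hC.1.eigenvalues i) := by
    calc (1 : ℝ) = ∏ _i : Fin k, (1 : ℝ) := by simp
      _ ≤ ∏ i, (1 + hC.1.eigenvalues i) := by
          apply Finset.prod_le_prod (fun _ _ => zero_le_one)
          intro i _
          linarith [hC.eigenvalues_nonneg i]
  exact_mod_cast h4

lemma my_det_le_det_add {k : ℕ} {M S : Matrix (Fin k) (Fin k) ℂ}
    (hM : M.PosDef) (hS : S.PosSemidef) : M.det ≤ (M + S).det := by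
  obtain ⟨R, hRps, hRR⟩ : ∃ R : Matrix (Fin k) (Fin k) ℂ, R.PosSemidef ∧ R * R = M := by
    open scoped MatrixOrder in
    exact ⟨CFC.sqrt M, (CFC.sqrt_nonneg M).posSemidef, CFC.sqrt_mul_sqrt_self M hM.posSemidef.nonneg⟩
  have hdetM : (0 : ℂ) < M.det := hM.det_pos
  have hdetR : IsUnit R.det := by
    have h : R.det * R.det = M.det := by rw [← Matrix.det_mul, hRR]
    have : R.det ≠ 0 := by
      intro h0
      rw [h0, mul_zero] at h
      exact hdetM.ne' h.symm
    exact this.isUnit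
  have hRinvH : (R⁻¹)ᴴ = R⁻¹ := by rw [Matrix.conjTranspose_nonsing_inv, hRps.1.eq]
  have hC : (R⁻¹ * S * R⁻¹).PosSemidef := by
    have h := hS.mul_mul_conjTranspose_same R⁻¹
    rwa [hRinvH] at h
  have key : M + S = R * (1 + R⁻¹ * S * R⁻¹) * R := by
    have h1 : R * R⁻¹ = 1 := Matrix.mul_nonsing_inv R hdetR
    have h2 : R⁻¹ * R = 1 := Matrix.nonsing_inv_mul R hdetR
    have h3 : R * (1 + R⁻¹ * S * R⁻¹) * R
        = R * R + (R * R⁻¹) * S * (R⁻¹ * R) := by noncomm_ring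
    rw [h3, h1, h2, hRR, one_mul, mul_one]
  rw [key, Matrix.det_mul, Matrix.det_mul, mul_right_comm, ← Matrix.det_mul, hRR]
  exact le_mul_of_one_le_right hdetM.le (my_one_le_det_one_add hC)

lemma my_smul_one_sub_posSemidef {k : ℕ} {Q : Matrix (Fin k) (Fin k) ℂ} (hQ : Q.PosSemidef)
    {P : ℝ} (hTr : Q.trace ≤ (P : ℂ)) :
    ((P : ℂ) • (1 : Matrix (Fin k) (Fin k) ℂ) - Q).PosSemidef := by
  have htr : ∑ i, hQ.1.eigenvalues i ≤ P := by
    have h := hTr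
    rw [my_trace_eq_sum_eig hQ.1] at h
    exact_mod_cast h
  have hle : ∀ i, hQ.1.eigenvalues i ≤ P := fun i =>
    le_trans (Finset.single_le_sum (fun j _ => hQ.eigenvalues_nonneg j) (Finset.mem_univ i)) htr
  have hU := (Matrix.mem_unitaryGroup_iff).mp (Matrix.IsHermitian.eigenvectorUnitary hQ.1).2
  set U : Matrix (Fin k) (Fin k) ℂ := (Matrix.IsHermitian.eigenvectorUnitary hQ.1 : Matrix (Fin k) (Fin k) ℂ) with hUdef
  have hDiag : (diagonal (fun i => ((P - hQ.1.eigenvalues i : ℝ) : ℂ))).PosSemidef := by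
    refine Matrix.posSemidef_diagonal_iff.mpr fun i => ?_
    have : (0 : ℝ) ≤ P - hQ.1.eigenvalues i := by linarith [hle i]
    exact_mod_cast this
  have key : (P : ℂ) • (1 : Matrix (Fin k) (Fin k) ℂ) - Q
      = U * diagonal (fun i => ((P - hQ.1.eigenvalues i : ℝ) : ℂ)) * star U := by
    have hsplit : diagonal (fun i => ((P - hQ.1.eigenvalues i : ℝ) : ℂ))
        = (P : ℂ) • (1 : Matrix (Fin k) (Fin k) ℂ)
          - diagonal (RCLike.ofReal ∘ hQ.1.eigenvalues) := by
      ext i j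
      by_cases hij : i = j <;>
        simp [diagonal, hij, Matrix.one_apply, Complex.ofReal_sub, RCLike.ofReal_alg]
    rw [hsplit, Matrix.mul_sub, Matrix.sub_mul]
    rw [Matrix.mul_smul, Matrix.smul_mul, Matrix.mul_one, hU]
    conv_lhs => rw [hQ.1.spectral_theorem]
    rw [Unitary.conjStarAlgAut_apply]
  rw [key]
  have h := hDiag.mul_mul_conjTranspose_same U
  rwa [← Matrix.star_eq_conjTranspose] at h

theorem stmt_17 (n m : ℕ) (hn : 1 ≤ n) (hm : 1 ≤ m)
    (H : Matrix (Fin n) (Fin m) ℂ) (P : ℝ) (hP : 0 < P)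
    (Q : Matrix (Fin m) (Fin m) ℂ) (hQ : Q.PosSemidef) (hTr : Q.trace ≤ (P : ℂ)) :
    (1 + H * Q * Hᴴ).det ≤ (1 + (P : ℂ) • (H * Hᴴ)).det := by
  have hA : (H * Q * Hᴴ).PosSemidef := hQ.mul_mul_conjTranspose_same H
  have hM : (1 + H * Q * Hᴴ).PosDef := Matrix.PosDef.one.add_posSemidef hA
  have hS : ((P : ℂ) • (H * Hᴴ) - H * Q * Hᴴ).PosSemidef := by
    have h := (my_smul_one_sub_posSemidef hQ hTr).mul_mul_conjTranspose_same H
    have heq : H * ((P : ℂ) • (1 : Matrix (Fin m) (Fin m) ℂ) - Q) * Hᴴ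
        = (P : ℂ) • (H * Hᴴ) - H * Q * Hᴴ := by
      rw [Matrix.mul_sub, Matrix.sub_mul, Matrix.mul_smul, Matrix.smul_mul, Matrix.mul_one]
    rwa [heq] at h
  have hfinal := my_det_le_det_add hM hS
  have heq2 : (1 + H * Q * Hᴴ) + ((P : ℂ) • (H * Hᴴ) - H * Q * Hᴴ)
      = 1 + (P : ℂ) • (H * Hᴴ) := by abel
  rwa [heq2] at hfinal
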